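/- Let Ω ⊆ ℝ² be open with x > 0 on Ω, and let f, u : Ω → ℝ be differentiable. Define h₁₁ = x²·cosh(u) − f²/cosh(u), h₁₂ = −f/cosh(u), h₂₂ = −1/cosh(u) on Ω (subscripts x and y denote partial derivatives). Then at every point b ∈ Ω with u(b) = 0 one has (h₁₁ₓ·h₂₂ₓ − h₁₂ₓ²)·(h₁₁ᵧ·h₂₂ᵧ − h₁₂ᵧ²) − ((h₁₁ₓ·h₂₂ᵧ + h₁₁ᵧ·h₂₂ₓ)/2 − h₁₂ₓ·h₁₂ᵧ)² = 0 at b; in other words, the first-order invariant det χ of the normalised Papapetrou vacuum metric vanishes on the hypersurface u = 0. -/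

import Mathlib

/-- Partial derivative with respect to the first coordinate of `ℝ × ℝ`. -/
noncomputable def pdx (f : ℝ × ℝ → ℝ) (p : ℝ × ℝ) : ℝ := fderiv ℝ f p (1, 0)

/-- Partial derivative with respect to the second coordinate of `ℝ × ℝ`. -/
noncomputable def pdy (f : ℝ × ℝ → ℝ) (p : ℝ × ℝ) : ℝ := fderiv ℝ f p (0, 1)

/-- **The invariant det χ of the normalised Papapetrou vacuum metric vanishes
on the hypersurface u = 0.**  The Killing part of the normalised Papapetrou
metric is `h₁₁ = x² cosh u − f²/cosh u`, `h₁₂ = −f/cosh u`, `h₂₂ = −1/cosh u`;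
at every point of `Ω` where `u = 0` one has
`(h₁₁ₓh₂₂ₓ − h₁₂ₓ²)(h₁₁ᵧh₂₂ᵧ − h₁₂ᵧ²) − ((h₁₁ₓh₂₂ᵧ + h₁₁ᵧh₂₂ₓ)/2 − h₁₂ₓh₁₂ᵧ)² = 0`. -/
theorem papapetrou_detChi_eq_zero_on_boundary
    (Ω : Set (ℝ × ℝ)) (hΩ : IsOpen Ω) (hx : ∀ p ∈ Ω, 0 < p.1)
    (f u : ℝ × ℝ → ℝ)
    (hf : ∀ p ∈ Ω, DifferentiableAt ℝ f p)
    (hu : ∀ p ∈ Ω, DifferentiableAt ℝ u p)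
    (h11 h12 h22 : ℝ × ℝ → ℝ)
    (hh11 : ∀ p : ℝ × ℝ, h11 p = p.1 ^ 2 * Real.cosh (u p) - f p ^ 2 / Real.cosh (u p))
    (hh12 : ∀ p : ℝ × ℝ, h12 p = -f p / Real.cosh (u p))
    (hh22 : ∀ p : ℝ × ℝ, h22 p = -1 / Real.cosh (u p)) :
    ∀ b ∈ Ω, u b = 0 →
      (pdx h11 b * pdx h22 b - (pdx h12 b) ^ 2) *
        (pdy h11 b * pdy h22 b - (pdy h12 b) ^ 2) -
      ((pdx h11 b * pdy h22 b + pdy h11 b * pdx h22 b) / 2 -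
        pdx h12 b * pdy h12 b) ^ 2 = 0 := by
  intro b hb hub
  have hcne : Real.cosh (u b) ≠ 0 := (Real.cosh_pos (u b)).ne'
  have hu' := (hu b hb).hasFDerivAt
  have hf' := (hf b hb).hasFDerivAt
  set U : (ℝ × ℝ) →L[ℝ] ℝ := fderiv ℝ u b with hU
  set F : (ℝ × ℝ) →L[ℝ] ℝ := fderiv ℝ f b with hF
  have hC : HasFDerivAt (fun p => Real.cosh (u p)) ((Real.sinh (u b)) • U) b :=
    (Real.hasDerivAt_cosh (u b)).comp_hasFDerivAt b hu'
  have hC0 : HasFDerivAt (fun p => Real.cosh (u p)) (0 : (ℝ × ℝ) →L[ℝ] ℝ) b := by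
    simpa [hub, Real.sinh_zero] using hC
  have hG : HasFDerivAt (fun p => (Real.cosh (u p))⁻¹) (0 : (ℝ × ℝ) →L[ℝ] ℝ) b := by
    have := (hasFDerivAt_inv' (𝕜 := ℝ) hcne).comp b hC0
    simpa [Function.comp_def] using this
  -- derivative of h22 is 0 at b
  have h22eq : h22 = fun p => -(Real.cosh (u p))⁻¹ := by
    funext p; rw [hh22 p]; ring
  have hH22 : HasFDerivAt h22 (0 : (ℝ × ℝ) →L[ℝ] ℝ) b := by
    rw [h22eq]; simpa [Pi.neg_def] using hG.neg
  -- derivative of h12 is -F at b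
  have h12eq : h12 = fun p => (-f p) * (Real.cosh (u p))⁻¹ := by
    funext p; rw [hh12 p]; ring
  have hH12 : HasFDerivAt h12 (-F) b := by
    rw [h12eq]
    have h1 : Real.cosh (u b) = 1 := by rw [hub, Real.cosh_zero]
    have hmul := (hf'.neg).mul' hG
    have heq : (-f) b • (0 : (ℝ × ℝ) →L[ℝ] ℝ) + MulOpposite.op ((Real.cosh (u b))⁻¹) • (-F) = -F := by
      ext v <;> simp [h1]
    rwa [heq] at hmul
  have p22 : fderiv ℝ h22 b = 0 := hH22.fderiv
  have p12 : fderiv ℝ h12 b = -F := hH12.fderiv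
  simp only [pdx, pdy, p22, p12]
  simp only [ContinuousLinearMap.zero_apply, ContinuousLinearMap.neg_apply]
  ring
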